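/- Let Ω be an algebraic closure of the rational function field ℚ(t), and consider the Weierstrass curve E₈(t) over Ω. The subset of the group of points E₈(t)(Ω) consisting of the point at infinity O together with all affine points (x, y) whose x-coordinate satisfies x·(x + t²)·(x² − 4tx − 4t³) = 0 is a cyclic subgroup of order 8. In particular, there exists a point of E₈(t)(Ω) of exact order 8 whose x-coordinate is a root of x² − 4tx − 4t³. -/

import Mathlib

open WeierstrassCurve

/-- The Weierstrass curve `E₈(t) : y² + 4xy + 4t²y = x³ + t²x²`. -/
def E8 {F : Type*} [CommRing F] (t : F) : WeierstrassCurve F :=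
  ⟨4, t ^ 2, 4 * t ^ 2, 0, 0⟩

private lemma some_eq_some' {F : Type*} [Field F] {W : Affine F} {x₁ y₁ x₂ y₂ : F}
    (h₁ : W.Nonsingular x₁ y₁) (h₂ : W.Nonsingular x₂ y₂) (hx : x₁ = x₂) (hy : y₁ = y₂) :
    Affine.Point.some _ _ h₁ = Affine.Point.some _ _ h₂ := by
  subst hx; subst hy; rfl

set_option maxHeartbeats 3200000 in
open Classical in
/-- over an algebraic closure `Ω` of `ℚ(t)`, the set consisting of `O` together
with the affine points of `E₈(t)` whose `x`-coordinate satisfies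
`x(x + t²)(x² - 4tx - 4t³) = 0` is a cyclic subgroup of order 8; in particular there is a point
of exact order 8 whose `x`-coordinate is a root of `x² - 4tx - 4t³`. -/
theorem stmt_4 :
    ∀ t : AlgebraicClosure (RatFunc ℚ),
      t = algebraMap (RatFunc ℚ) (AlgebraicClosure (RatFunc ℚ)) RatFunc.X →
    ∀ W : Affine (AlgebraicClosure (RatFunc ℚ)), W = (E8 t).toAffine →
    ∀ S : Set W.Point,
      S = {P | P = 0 ∨ ∃ (x y : AlgebraicClosure (RatFunc ℚ)) (h : W.Nonsingular x y),
        P = Affine.Point.some _ _ h ∧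
          x * (x + t ^ 2) * (x ^ 2 - 4 * t * x - 4 * t ^ 3) = 0} →
    (∃ H : AddSubgroup W.Point, (H : Set W.Point) = S ∧ IsAddCyclic H ∧ Nat.card H = 8) ∧
    ∃ (x y : AlgebraicClosure (RatFunc ℚ)) (h : W.Nonsingular x y),
      x ^ 2 - 4 * t * x - 4 * t ^ 3 = 0 ∧
      addOrderOf (Affine.Point.some _ _ h) = 8 ∧
      (AddSubgroup.zmultiples (Affine.Point.some _ _ h) : Set W.Point) = S := by
  intro t ht W hW S hS
  subst hW
  subst hS
  haveI : CharZero (RatFunc ℚ) :=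
    charZero_of_injective_algebraMap (algebraMap ℚ (RatFunc ℚ)).injective
  set W := (E8 t).toAffine with hWdef
  have ha1 : W.a₁ = 4 := rfl
  have ha2 : W.a₂ = t ^ 2 := rfl
  have ha3 : W.a₃ = 4 * t ^ 2 := rfl
  have ha4 : W.a₄ = 0 := rfl
  have ha6 : W.a₆ = 0 := rfl
  -- transcendence facts
  have hinj : Function.Injective (algebraMap (RatFunc ℚ) (AlgebraicClosure (RatFunc ℚ))) := (algebraMap (RatFunc ℚ) (AlgebraicClosure (RatFunc ℚ))).injective
  have ht0 : t ≠ 0 := by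
    intro h
    apply RatFunc.X_ne_zero (K := ℚ)
    apply hinj
    rw [← ht, h, map_zero]
  have ht1 : t + 1 ≠ 0 := by
    intro h
    have : RatFunc.X + 1 = (0 : RatFunc ℚ) := by
      apply hinj
      rw [map_add, map_one, ← ht, map_zero, h]
    have h2 : (Polynomial.X + 1 : Polynomial ℚ) = 0 := by
      apply RatFunc.algebraMap_injective ℚ
      rw [map_add, map_one, RatFunc.algebraMap_X, map_zero, this]
    have := congrArg (Polynomial.eval 0) h2
    simp at this
  -- square root of t + 1
  obtain ⟨r, hr⟩ : ∃ r : AlgebraicClosure (RatFunc ℚ), r ^ 2 = t + 1 := by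
    obtain ⟨r, hr⟩ := IsAlgClosed.exists_pow_nat_eq (t + 1) (n := 2) (by norm_num)
    exact ⟨r, hr⟩
  have hnz : ∀ a b : AlgebraicClosure (RatFunc ℚ), a ^ 2 - b ^ 2 * (t + 1) ≠ 0 → a + b * r ≠ 0 := by
    intro a b hn h
    exact hn (by linear_combination (a - b * r) * h + b ^ 2 * hr)
  have hnorm1 : (8 * t ^ 2 + 8 * t) ^ 2 - (4 * t ^ 2 + 8 * t) ^ 2 * (t + 1) ≠ 0 := by
    have : (8 * t ^ 2 + 8 * t) ^ 2 - (4 * t ^ 2 + 8 * t) ^ 2 * (t + 1)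
        = -16 * (t ^ 4 * (t + 1)) := by ring
    rw [this]
    exact mul_ne_zero (by norm_num) (mul_ne_zero (pow_ne_zero 4 ht0) ht1)
  have hnorm2 : (2 * t) ^ 2 - (2 * t) ^ 2 * (t + 1) ≠ 0 := by
    have : (2 * t) ^ 2 - (2 * t) ^ 2 * (t + 1) = -4 * t ^ 3 := by ring
    rw [this]
    exact mul_ne_zero (by norm_num) (pow_ne_zero 3 ht0)
  -- the points
  set x1 : AlgebraicClosure (RatFunc ℚ) := 2 * t + 2 * t * r with hx1def
  set y1 : AlgebraicClosure (RatFunc ℚ) := 2 * t ^ 2 + 2 * t ^ 2 * r with hy1def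
  set x3 : AlgebraicClosure (RatFunc ℚ) := 2 * t - 2 * t * r with hx3def
  set y3 : AlgebraicClosure (RatFunc ℚ) := -8 * t - 6 * t ^ 2 + (8 * t + 2 * t ^ 2) * r with hy3def
  have hP : W.Nonsingular x1 y1 := by
    rw [Affine.nonsingular_iff, Affine.equation_iff, ha1, ha2, ha3, ha4, ha6]
    constructor
    · linear_combination (-8 * t ^ 3 - 8 * t ^ 3 * r) * hr
    · right
      intro h
      exact hnz (8 * t ^ 2 + 8 * t) (4 * t ^ 2 + 8 * t) hnorm1 (by linear_combination h)
  have h2 : W.Nonsingular 0 0 := by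
    rw [Affine.nonsingular_iff, Affine.equation_iff, ha1, ha2, ha3, ha4, ha6]
    constructor
    · ring
    · right
      intro h
      apply ht0
      have h2 : t ^ 2 = 0 := by linear_combination h / 4
      exact (pow_eq_zero_iff two_ne_zero).mp h2
  have h4 : W.Nonsingular (-t ^ 2) 0 := by
    rw [Affine.nonsingular_iff, Affine.equation_iff, ha1, ha2, ha3, ha4, ha6]
    constructor
    · ring
    · left
      intro h
      apply ht0
      have h2 : t ^ 4 = 0 := by linear_combination -h
      exact (pow_eq_zero_iff (by norm_num : (4 : ℕ) ≠ 0)).mp h2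
  have h3 : W.Nonsingular x3 y3 := by
    rw [Affine.nonsingular_iff, Affine.equation_iff, ha1, ha2, ha3, ha4, ha6]
    constructor
    · linear_combination (-8 * t ^ 3 + 8 * t ^ 3 * r) * hr
    · right
      intro h
      exact hnz (-8 * t ^ 2 - 8 * t) (4 * t ^ 2 + 8 * t) (by
        have : (-8 * t ^ 2 - 8 * t) ^ 2 - (4 * t ^ 2 + 8 * t) ^ 2 * (t + 1)
            = -16 * (t ^ 4 * (t + 1)) := by ring
        rw [this]
        exact mul_ne_zero (by norm_num) (mul_ne_zero (pow_ne_zero 4 ht0) ht1))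
        (by linear_combination h)
  -- negY computations
  have hneg1 : W.negY x1 y1 = -6 * t ^ 2 - 8 * t - (2 * t ^ 2 + 8 * t) * r := by
    rw [Affine.negY, ha1, ha3]; ring
  have hneg2 : W.negY 0 0 = -(4 * t ^ 2) := by
    rw [Affine.negY, ha1, ha3]; ring
  have hneg3 : W.negY x3 y3 = 2 * t ^ 2 - 2 * t ^ 2 * r := by
    rw [Affine.negY, ha1, ha3]; ring
  have hneg4 : (0 : AlgebraicClosure (RatFunc ℚ)) = W.negY (-t ^ 2) 0 := by
    rw [Affine.negY, ha1, ha3]; ring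
  have hy1' : y1 ≠ W.negY x1 y1 := by
    rw [hneg1]
    intro h
    exact hnz (8 * t ^ 2 + 8 * t) (4 * t ^ 2 + 8 * t) hnorm1 (by linear_combination h)
  have hy2' : (0 : AlgebraicClosure (RatFunc ℚ)) ≠ W.negY 0 0 := by
    rw [hneg2]
    intro h
    apply ht0
    have h2 : t ^ 2 = 0 := by linear_combination h / 4
    exact (pow_eq_zero_iff two_ne_zero).mp h2
  have hx2ne : (0 : AlgebraicClosure (RatFunc ℚ)) ≠ x1 := by
    intro h
    exact hnz (2 * t) (2 * t) hnorm2 (by linear_combination -h)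
  -- slopes and addition coordinates
  have hsl1 : W.slope x1 x1 y1 y1 = t - 2 + 2 * r := by
    rw [Affine.slope_of_Y_ne rfl hy1', hneg1, ha1, ha2, ha4]
    rw [div_eq_iff (by
      intro h
      exact hnz (8 * t ^ 2 + 8 * t) (4 * t ^ 2 + 8 * t) hnorm1 (by linear_combination h))]
    linear_combination (4 * t ^ 2 - 16 * t) * hr
  have hadd1x : W.addX x1 x1 (W.slope x1 x1 y1 y1) = 0 := by
    rw [hsl1, Affine.addX, ha1, ha2]
    linear_combination 4 * hr
  have hadd1y : W.addY x1 x1 y1 (W.slope x1 x1 y1 y1) = 0 := by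
    rw [Affine.addY, Affine.negAddY, Affine.addX, hsl1, Affine.negY, ha1, ha2, ha3]
    linear_combination (-8 - 8 * r) * hr
  have hsl2 : W.slope 0 x1 0 y1 = t := by
    rw [Affine.slope_of_X_ne hx2ne]
    rw [div_eq_iff (sub_ne_zero.mpr hx2ne)]
    ring
  have hadd2x : W.addX 0 x1 (W.slope 0 x1 0 y1) = x3 := by
    rw [hsl2, Affine.addX, ha1, ha2]; ring
  have hadd2y : W.addY 0 x1 0 (W.slope 0 x1 0 y1) = y3 := by
    rw [Affine.addY, Affine.negAddY, Affine.addX, hsl2, Affine.negY, ha1, ha2, ha3]; ring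
  have hsl4 : W.slope 0 0 0 0 = 0 := by
    rw [Affine.slope_of_Y_ne rfl hy2', ha1, ha2, ha4]
    norm_num
  have hadd4x : W.addX 0 0 (W.slope 0 0 0 0) = -t ^ 2 := by
    rw [hsl4, Affine.addX, ha1, ha2]; ring
  have hadd4y : W.addY 0 0 0 (W.slope 0 0 0 0) = 0 := by
    rw [Affine.addY, Affine.negAddY, Affine.addX, hsl4, Affine.negY, ha1, ha2, ha3]; ring
  -- point arithmetic
  set P : W.Point := Affine.Point.some _ _ hP with hPdef
  have e2 : P + P = Affine.Point.some _ _ h2 := by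
    rw [hPdef, Affine.Point.add_self_of_Y_ne hy1']
    exact some_eq_some' _ _ hadd1x hadd1y
  have e3 : Affine.Point.some _ _ h2 + P = Affine.Point.some _ _ h3 := by
    rw [hPdef, Affine.Point.add_of_X_ne hx2ne]
    exact some_eq_some' _ _ hadd2x hadd2y
  have e4 : Affine.Point.some _ _ h2 + Affine.Point.some _ _ h2 = Affine.Point.some _ _ h4 := by
    rw [Affine.Point.add_self_of_Y_ne hy2']
    exact some_eq_some' _ _ hadd4x hadd4y
  have e8 : Affine.Point.some _ _ h4 + Affine.Point.some _ _ h4 = 0 :=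
    Affine.Point.add_self_of_Y_eq hneg4
  have n0 : (0 : ℤ) • P = 0 := zero_zsmul P
  have n1 : (1 : ℤ) • P = P := one_zsmul P
  have n2 : (2 : ℤ) • P = Affine.Point.some _ _ h2 := by rw [two_zsmul]; exact e2
  have n3 : (3 : ℤ) • P = Affine.Point.some _ _ h3 := by
    rw [show (3 : ℤ) = 2 + 1 by norm_num, add_zsmul, n2, one_zsmul]
    exact e3
  have n4 : (4 : ℤ) • P = Affine.Point.some _ _ h4 := by
    rw [show (4 : ℤ) = 2 + 2 by norm_num, add_zsmul, n2]
    exact e4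
  have n8 : (8 : ℤ) • P = 0 := by
    rw [show (8 : ℤ) = 4 + 4 by norm_num, add_zsmul, n4]
    exact e8
  have n5 : (5 : ℤ) • P = -Affine.Point.some _ _ h3 := by
    rw [show (5 : ℤ) = 8 + -3 by norm_num, add_zsmul, n8, zero_add, show (-3 : ℤ) = -(3) from rfl,
      neg_zsmul, n3]
  have n6 : (6 : ℤ) • P = -Affine.Point.some _ _ h2 := by
    rw [show (6 : ℤ) = 8 + -2 by norm_num, add_zsmul, n8, zero_add, show (-2 : ℤ) = -(2) from rfl,
      neg_zsmul, n2]
  have n7 : (7 : ℤ) • P = -P := by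
    rw [show (7 : ℤ) = 8 + -1 by norm_num, add_zsmul, n8, zero_add, show (-1 : ℤ) = -(1) from rfl,
      neg_zsmul, n1]
  -- order of P
  have hord : addOrderOf P = 8 := by
    have h8 : (2 ^ 3 : ℕ) • P = 0 := by
      have := n8
      rw [show (8 : ℤ) = ((8 : ℕ) : ℤ) by norm_num, natCast_zsmul] at this
      simpa using this
    have h4' : ¬(2 ^ 2 : ℕ) • P = 0 := by
      have := n4
      rw [show (4 : ℤ) = ((4 : ℕ) : ℤ) by norm_num, natCast_zsmul] at this
      intro hc
      rw [show (2 ^ 2 : ℕ) = 4 by norm_num, this] at hc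
      exact Affine.Point.some_ne_zero h4 hc
    have := addOrderOf_eq_prime_pow (p := 2) (n := 2) h4' h8
    simpa using this
  -- the set equality
  have hset : (AddSubgroup.zmultiples P : Set W.Point)
      = {Q | Q = 0 ∨ ∃ (x y : AlgebraicClosure (RatFunc ℚ)) (h : W.Nonsingular x y),
          Q = Affine.Point.some _ _ h ∧ x * (x + t ^ 2) * (x ^ 2 - 4 * t * x - 4 * t ^ 3) = 0} := by
    ext Q
    constructor
    · intro hQ
      rw [SetLike.mem_coe, AddSubgroup.mem_zmultiples_iff] at hQ
      obtain ⟨n, rfl⟩ := hQ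
      obtain ⟨m, hge, hlt, key⟩ : ∃ m : ℤ, 0 ≤ m ∧ m < 8 ∧ n • P = m • P := by
        refine ⟨n % 8, Int.emod_nonneg n (by norm_num), Int.emod_lt_of_pos n (by norm_num), ?_⟩
        conv_lhs => rw [← Int.mul_ediv_add_emod n 8]
        rw [add_zsmul, mul_comm, mul_zsmul, n8, zsmul_zero, zero_add]
      rw [Set.mem_setOf_eq, key]
      interval_cases m
      · rw [n0]; exact Or.inl rfl
      · rw [n1, hPdef]
        exact Or.inr ⟨x1, y1, hP, rfl, (by
          linear_combination ((2 * t + 2 * t * r) * ((2 * t + 2 * t * r) + t ^ 2) * (4 * t ^ 2)) * hr)⟩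
      · rw [n2]
        exact Or.inr ⟨0, 0, h2, rfl, by ring⟩
      · rw [n3]
        exact Or.inr ⟨x3, y3, h3, rfl, (by
          linear_combination ((2 * t - 2 * t * r) * ((2 * t - 2 * t * r) + t ^ 2) * (4 * t ^ 2)) * hr)⟩
      · rw [n4]
        exact Or.inr ⟨-t ^ 2, 0, h4, rfl, by ring⟩
      · rw [n5, Affine.Point.neg_some]
        exact Or.inr ⟨x3, W.negY x3 y3, ((Affine.nonsingular_neg ..).mpr h3), rfl, (by
          linear_combination ((2 * t - 2 * t * r) * ((2 * t - 2 * t * r) + t ^ 2) * (4 * t ^ 2)) * hr)⟩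
      · rw [n6, Affine.Point.neg_some]
        exact Or.inr ⟨0, W.negY 0 0, ((Affine.nonsingular_neg ..).mpr h2), rfl, by ring⟩
      · rw [n7, hPdef, Affine.Point.neg_some]
        exact Or.inr ⟨x1, W.negY x1 y1, ((Affine.nonsingular_neg ..).mpr hP), rfl, (by
          linear_combination ((2 * t + 2 * t * r) * ((2 * t + 2 * t * r) + t ^ 2) * (4 * t ^ 2)) * hr)⟩
    · intro hQ
      rw [SetLike.mem_coe, AddSubgroup.mem_zmultiples_iff]
      rcases hQ with rfl | ⟨x, y, h, rfl, hxeq⟩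
      · exact ⟨0, n0⟩
      · have heq : y ^ 2 + 4 * x * y + 4 * t ^ 2 * y = x ^ 3 + t ^ 2 * x ^ 2 := by
          have := (W.equation_iff x y).mp ((W.nonsingular_iff x y).mp h).1
          rw [ha1, ha2, ha3, ha4, ha6] at this
          linear_combination this
        rcases mul_eq_zero.mp hxeq with h12 | hquad
        · rcases mul_eq_zero.mp h12 with hx0 | hxt
          · subst hx0
            have hy2 : y * (y + 4 * t ^ 2) = 0 := by linear_combination heq
            rcases mul_eq_zero.mp hy2 with hy0 | hy6
            · subst hy0
              exact ⟨2, n2.trans (some_eq_some' _ _ rfl rfl)⟩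
            · refine ⟨6, n6.trans ?_⟩
              rw [Affine.Point.neg_some]
              exact some_eq_some' _ _ rfl (by rw [hneg2]; linear_combination -hy6)
          · have hx4 : x = -t ^ 2 := by linear_combination hxt
            subst hx4
            have hy2 : y ^ 2 = 0 := by linear_combination heq
            have hy0 : y = 0 := (pow_eq_zero_iff two_ne_zero).mp hy2
            subst hy0
            exact ⟨4, n4.trans (some_eq_some' _ _ rfl rfl)⟩
        · have hfac : (x - (2 * t + 2 * t * r)) * (x - (2 * t - 2 * t * r)) = 0 := by
            linear_combination hquad - 4 * t ^ 2 * hr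
          rcases mul_eq_zero.mp hfac with hc1 | hc3
          · have hxx : x = x1 := by rw [hx1def]; linear_combination hc1
            subst hxx
            have hyfac : (y - y1) * (y - (-6 * t ^ 2 - 8 * t - (2 * t ^ 2 + 8 * t) * r)) = 0 := by
              rw [hx1def] at heq
              rw [hy1def]
              linear_combination heq + (8 * t ^ 3 + 8 * t ^ 3 * r) * hr
            rcases mul_eq_zero.mp hyfac with hya | hyb
            · exact ⟨1, n1.trans (some_eq_some' _ _ rfl
                (by rw [hy1def]; linear_combination -hya))⟩
            · refine ⟨7, n7.trans ?_⟩
              rw [hPdef, Affine.Point.neg_some]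
              exact some_eq_some' _ _ rfl (by rw [hneg1]; linear_combination -hyb)
          · have hxx : x = x3 := by rw [hx3def]; linear_combination hc3
            subst hxx
            have hyfac : (y - y3) * (y - (2 * t ^ 2 - 2 * t ^ 2 * r)) = 0 := by
              rw [hx3def] at heq
              rw [hy3def]
              linear_combination heq + (8 * t ^ 3 - 8 * t ^ 3 * r) * hr
            rcases mul_eq_zero.mp hyfac with hya | hyb
            · exact ⟨3, n3.trans (some_eq_some' _ _ rfl
                (by rw [hy3def]; linear_combination -hya))⟩
            · refine ⟨5, n5.trans ?_⟩
              rw [Affine.Point.neg_some]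
              exact some_eq_some' _ _ rfl (by rw [hneg3]; linear_combination -hyb)
  constructor
  · refine ⟨AddSubgroup.zmultiples P, hset, ?_, ?_⟩
    · refine ⟨⟨P, AddSubgroup.mem_zmultiples P⟩, fun x => AddSubgroup.mem_zmultiples_iff.mpr ?_⟩
      obtain ⟨n, hn⟩ := AddSubgroup.mem_zmultiples_iff.mp x.2
      exact ⟨n, Subtype.ext (by simpa using hn)⟩
    · rw [Nat.card_zmultiples]
      exact hord
  · exact ⟨x1, y1, hP, by linear_combination 4 * t ^ 2 * hr, hord, hset⟩
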